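/- Fix K, σ, τ > 0 and x > 0, let Φ be the standard normal cumulative distribution function, and for S > 0 set d1(S) = (ln(S/K) + (σ²/2)τ)/(σ√τ), d2(S) = d1(S) − σ√τ and α(S) = x·(K − S)/(K·Φ(−d2(S)) − S·Φ(−d1(S))). Then α is strictly decreasing on (0, ∞): for 0 < S₁ < S₂ one has α(S₂) < α(S₁). -/

import Mathlib

open Real Filter MeasureTheory

/-- The cumulative distribution function of the standard normal distribution
(Gaussian measure on ℝ with mean 0 and variance 1). -/
noncomputable def Φ (x : ℝ) : ℝ :=
  (ProbabilityTheory.gaussianReal 0 1 (Set.Iic x)).toReal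

noncomputable def phi (t : ℝ) : ℝ := (Real.sqrt (2 * Real.pi))⁻¹ * Real.exp (-t^2 / 2)




lemma phi_eq_pdf : ProbabilityTheory.gaussianPDFReal 0 1 = phi := by
  funext t
  simp only [ProbabilityTheory.gaussianPDFReal, phi, NNReal.coe_one, mul_one, sub_zero]

lemma phi_pos (t : ℝ) : 0 < phi t :=
  mul_pos (inv_pos.mpr (Real.sqrt_pos.mpr (by positivity))) (Real.exp_pos _)

lemma phi_neg (t : ℝ) : phi (-t) = phi t := by simp [phi]

lemma continuous_phi : Continuous phi :=
  continuous_const.mul (Real.continuous_exp.comp (by continuity))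

lemma integrable_phi : Integrable phi :=
  phi_eq_pdf ▸ ProbabilityTheory.integrable_gaussianPDFReal 0 1

lemma Phi_eq (x : ℝ) : Φ x = ∫ t in Set.Iic x, phi t := by
  rw [Φ, ProbabilityTheory.gaussianReal_apply_eq_integral 0 one_ne_zero, phi_eq_pdf,
    ENNReal.toReal_ofReal]
  exact setIntegral_nonneg measurableSet_Iic fun t _ => (phi_pos t).le

lemma Phi_sub_Phi (a b : ℝ) : Φ b - Φ a = ∫ t in a..b, phi t := by
  rw [Phi_eq, Phi_eq]
  exact intervalIntegral.integral_Iic_sub_Iic integrable_phi.integrableOn integrable_phi.integrableOn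

lemma hasDerivAt_Phi (x : ℝ) : HasDerivAt Φ (phi x) x := by
  have h : HasDerivAt (fun u => Φ 0 + ∫ t in (0:ℝ)..u, phi t) (phi x) x := by
    apply HasDerivAt.const_add
    exact intervalIntegral.integral_hasDerivAt_right
      (integrable_phi.intervalIntegrable)
      (continuous_phi.stronglyMeasurable.stronglyMeasurableAtFilter)
      continuous_phi.continuousAt
  convert h using 1
  funext u
  rw [← Phi_sub_Phi 0 u]; ring

lemma Phi_nonneg (x : ℝ) : 0 ≤ Φ x := ENNReal.toReal_nonneg

lemma Phi_strictMono : StrictMono Φ :=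
  strictMono_of_deriv_pos fun x => by
    rw [(hasDerivAt_Phi x).deriv]; exact phi_pos x

lemma Phi_pos (x : ℝ) : 0 < Φ x :=
  lt_of_le_of_lt (Phi_nonneg (x - 1)) (Phi_strictMono (by linarith))

lemma hasDerivAt_phi (t : ℝ) : HasDerivAt phi (-t * phi t) t := by
  have h : HasDerivAt (fun u : ℝ => -u^2/2) (-t) t := by
    have h0 := ((hasDerivAt_pow 2 t).neg).div_const 2
    norm_num at h0
    first
    | exact h0
    | (rw [show -t = -(2 * t) / 2 by ring]; exact h0)
  have h2 := (h.exp).const_mul ((Real.sqrt (2 * Real.pi))⁻¹)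
  have he : -t * phi t = (Real.sqrt (2 * Real.pi))⁻¹ * (Real.exp (-t^2/2) * -t) := by
    unfold phi; ring
  rw [he]; exact h2

lemma integrable_mul_phi : Integrable (fun t => t * phi t) := by
  have h := (integrable_mul_exp_neg_mul_sq (b := (1:ℝ)/2) (by norm_num)).const_mul
    ((Real.sqrt (2 * Real.pi))⁻¹)
  apply h.congr
  filter_upwards with t
  unfold phi
  rw [show -t^2/2 = -(1/2) * t^2 by ring]
  ring

lemma tendsto_phi_atBot : Tendsto phi atBot (nhds 0) := by
  have h1 : Tendsto (fun t : ℝ => t^2) atBot atTop := by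
    have h := (tendsto_pow_atTop (n := 2) (by norm_num)).comp
      (tendsto_neg_atBot_atTop : Tendsto (fun t : ℝ => -t) atBot atTop)
    exact h.congr fun t => neg_sq t
  have h2 : Tendsto (fun t : ℝ => -t^2/2) atBot atBot := by
    have := tendsto_neg_atTop_atBot.comp h1
    exact Tendsto.atBot_div_const (by norm_num) this
  have h3 := (Real.tendsto_exp_atBot.comp h2).const_mul ((Real.sqrt (2 * Real.pi))⁻¹)
  have : (fun t => (Real.sqrt (2 * Real.pi))⁻¹ * Real.exp (-t^2/2)) = phi := rfl
  rw [show nhds (0:ℝ) = nhds ((Real.sqrt (2 * Real.pi))⁻¹ * 0) by norm_num]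
  exact h3

lemma integral_mul_phi (y : ℝ) : ∫ t in Set.Iic y, t * phi t = -phi y := by
  have h := integral_Iic_of_hasDerivAt_of_tendsto (f := fun t => -phi t)
    (f' := fun t => t * phi t) (a := y) (m := 0)
    ((continuous_phi.neg).continuousWithinAt)
    (fun t _ => by
      have := (hasDerivAt_phi t).neg
      rw [show -(-t * phi t) = t * phi t by ring] at this
      exact this)
    (integrable_mul_phi.integrableOn)
    (by simpa using tendsto_phi_atBot.neg)
  simpa using h

lemma mills_nonneg (y : ℝ) : 0 ≤ phi y + y * Φ y := by
  rcases le_or_gt 0 y with hy | hy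
  · nlinarith [phi_pos y, Phi_nonneg y]
  · have h1 : Φ y = ∫ t in Set.Iic y, phi t := Phi_eq y
    have h2 : ∫ t in Set.Iic y, (-y) * phi t ≤ ∫ t in Set.Iic y, (-t) * phi t := by
      apply setIntegral_mono_on (integrable_phi.integrableOn.const_mul _)
        ((integrable_mul_phi.neg.congr (by filter_upwards with t using by simp [neg_mul])).integrableOn)
        measurableSet_Iic
      intro t ht
      have htle : t ≤ y := ht
      nlinarith [phi_pos t]
    rw [MeasureTheory.integral_const_mul] at h2
    have h3 : ∫ t in Set.Iic y, (-t) * phi t = phi y := by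
      have h4 : ∫ t in Set.Iic y, (-t) * phi t = -∫ t in Set.Iic y, t * phi t := by
        rw [← integral_neg]; congr 1 with t; ring
      rw [h4, integral_mul_phi, neg_neg]
    rw [← h1, h3] at h2
    nlinarith

lemma mills_pos (y : ℝ) : 0 < phi y + y * Φ y := by
  have hM : StrictMono (fun y => phi y + y * Φ y) := by
    apply strictMono_of_deriv_pos
    intro t
    have hd : HasDerivAt (fun y => phi y + y * Φ y) (Φ t) t := by
      have h := (hasDerivAt_phi t).add (((hasDerivAt_id t).mul (hasDerivAt_Phi t)))
      simp only [id_eq, one_mul] at h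
      rw [show -t * phi t + (Φ t + t * phi t) = Φ t by ring] at h
      exact h
    rw [hd.deriv]; exact Phi_pos t
  calc (0:ℝ) ≤ phi (y-1) + (y-1) * Φ (y-1) := mills_nonneg (y-1)
    _ < phi y + y * Φ y := hM (by linarith)

lemma Phi_lt_exp_mul (b c : ℝ) (hc : 0 < c) :
    Φ b < Real.exp (b * c + c^2/2) * Φ (b + c) := by
  have hH : StrictMono (fun t => Real.exp (b * t + t^2/2) * Φ (b + t)) := by
    apply strictMono_of_deriv_pos
    intro t
    have h1 : HasDerivAt (fun t : ℝ => b * t + t^2/2) (b + t) t := by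
      have h := ((hasDerivAt_id t).const_mul b).add ((hasDerivAt_pow 2 t).div_const 2)
      norm_num at h
      first
      | exact h
      | (convert h using 1; ring)
    have h2 : HasDerivAt (fun t : ℝ => Φ (b + t)) (phi (b + t)) t := by
      have := (hasDerivAt_Phi (b + t)).comp t ((hasDerivAt_const t b).add (hasDerivAt_id t))
      simpa [Function.comp_def] using this
    have hd : HasDerivAt (fun t => Real.exp (b * t + t^2/2) * Φ (b + t)) _ t := (h1.exp).mul h2
    rw [hd.deriv]
    have := mills_pos (b + t)
    have he := Real.exp_pos (b * t + t^2/2)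
    nlinarith
  have := hH (show (0:ℝ) < c from hc)
  simpa using this

/-- The put-hedging ratio α(S) = x·(K − S)/V_put(S) is strictly decreasing on (0, ∞). -/
theorem alpha_strictAnti (K σ τ x : ℝ) (hK : 0 < K) (hσ : 0 < σ) (hτ : 0 < τ)
    (hx : 0 < x)
    (d1 d2 α : ℝ → ℝ)
    (hd1 : ∀ S, d1 S = (Real.log (S / K) + (σ ^ 2 / 2) * τ) / (σ * Real.sqrt τ))
    (hd2 : ∀ S, d2 S = d1 S - σ * Real.sqrt τ)
    (hα : ∀ S, α S = x * (K - S) / (K * Φ (-(d2 S)) - S * Φ (-(d1 S)))) :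
    ∀ S₁ S₂ : ℝ, 0 < S₁ → S₁ < S₂ → α S₂ < α S₁ := by
  set c : ℝ := σ * Real.sqrt τ with hc_def
  have hc : 0 < c := mul_pos hσ (Real.sqrt_pos.mpr hτ)
  have hc2 : c ^ 2 = σ ^ 2 * τ := by
    rw [hc_def, mul_pow, Real.sq_sqrt hτ.le]
  set V : ℝ → ℝ := fun S => K * Φ (-(d2 S)) - S * Φ (-(d1 S)) with hV_def
  -- basic d1 facts
  have hd1c : ∀ S : ℝ, 0 < S → d1 S * c = Real.log (S / K) + c ^ 2 / 2 := by
    intro S hS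
    rw [hd1]
    field_simp
    rw [hc2]
  -- V positivity
  have hVpos : ∀ S : ℝ, 0 < S → S * Φ (-(d1 S)) < K * Φ (-(d2 S)) := by
    intro S hS
    have h := Phi_lt_exp_mul (-(d1 S)) c hc
    have hbc : -(d1 S) + c = -(d2 S) := by rw [hd2]; ring
    have hexp : Real.exp (-(d1 S) * c + c ^ 2 / 2) = K / S := by
      rw [show -(d1 S) * c + c ^ 2 / 2 = -(d1 S * c) + c ^ 2 / 2 by ring, hd1c S hS]
      rw [show -(Real.log (S / K) + c ^ 2 / 2) + c ^ 2 / 2 = -Real.log (S / K) by ring]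
      rw [← Real.log_inv, inv_div]
      exact Real.exp_log (div_pos hK hS)
    rw [hbc, hexp] at h
    calc S * Φ (-(d1 S)) < S * (K / S * Φ (-(d2 S))) := mul_lt_mul_of_pos_left h hS
      _ = K * Φ (-(d2 S)) := by field_simp
  have hV0 : ∀ S : ℝ, 0 < S → 0 < V S := fun S hS => sub_pos.mpr (hVpos S hS)
  -- the key Gaussian-density identity
  have hkey : ∀ S : ℝ, 0 < S → K * phi (-(d2 S)) = S * phi (-(d1 S)) := by
    intro S hS
    rw [phi_neg, phi_neg]
    have hsq : d1 S ^ 2 = d2 S ^ 2 + 2 * Real.log (S / K) := by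
      have h1 := hd1c S hS
      have h2 : d2 S = d1 S - c := hd2 S
      rw [h2]; linear_combination 2 * h1
    unfold phi
    rw [show -(d1 S)^2/2 = -(d2 S)^2/2 + -Real.log (S / K) by rw [hsq]; ring,
      Real.exp_add, ← Real.log_inv, inv_div, Real.exp_log (div_pos hK hS)]
    field_simp
  -- derivative of d1
  have hd1' : ∀ S : ℝ, 0 < S → HasDerivAt d1 (1 / (S * c)) S := by
    intro S hS
    have hev : (fun S => (Real.log S - Real.log K + σ ^ 2 / 2 * τ) / c) =ᶠ[nhds S] d1 := by
      filter_upwards [IsOpen.mem_nhds isOpen_Ioi (Set.mem_Ioi.mpr hS)] with u hu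
      rw [hd1, Real.log_div (ne_of_gt hu) hK.ne']
    have h : HasDerivAt (fun S => (Real.log S - Real.log K + σ ^ 2 / 2 * τ) / c)
        (1 / (S * c)) S := by
      have := (((Real.hasDerivAt_log hS.ne').sub_const (Real.log K)).add_const
        (σ ^ 2 / 2 * τ)).div_const c
      rw [show S⁻¹ / c = 1 / (S * c) by field_simp] at this
      exact this
    exact h.congr_of_eventuallyEq hev.symm
  have hd2' : ∀ S : ℝ, 0 < S → HasDerivAt d2 (1 / (S * c)) S := by
    intro S hS
    have : d2 = fun S => d1 S - c := funext hd2
    rw [this]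
    exact (hd1' S hS).sub_const c
  -- derivative of V
  have hV' : ∀ S : ℝ, 0 < S → HasDerivAt V (-Φ (-(d1 S))) S := by
    intro S hS
    have hA : HasDerivAt (fun S => Φ (-(d2 S))) (phi (-(d2 S)) * -(1 / (S * c))) S :=
      by have := (hasDerivAt_Phi (-(d2 S))).comp S (hd2' S hS).neg; exact this
    have hB : HasDerivAt (fun S => Φ (-(d1 S))) (phi (-(d1 S)) * -(1 / (S * c))) S :=
      by have := (hasDerivAt_Phi (-(d1 S))).comp S (hd1' S hS).neg; exact this
    have h := (hA.const_mul K).sub ((hasDerivAt_id S).mul hB)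
    have hcalc : K * (phi (-(d2 S)) * -(1 / (S * c))) -
        (1 * Φ (-(d1 S)) + S * (phi (-(d1 S)) * -(1 / (S * c)))) = -Φ (-(d1 S)) := by
      have h0 : K * phi (-(d2 S)) - S * phi (-(d1 S)) = 0 := by rw [hkey S hS]; ring
      linear_combination (-(1 / (S * c))) * h0
    simp only [id_eq] at h
    rw [hcalc] at h
    exact h
  -- f = (K - S)/V is strictly decreasing on Ioi 0
  set f : ℝ → ℝ := fun S => (K - S) / V S with hf_def
  have hf' : ∀ S : ℝ, 0 < S → HasDerivAt f
      (((-1) * V S - (K - S) * (-Φ (-(d1 S)))) / (V S) ^ 2) S := by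
    intro S hS
    exact (((hasDerivAt_id S).const_sub K)).div (hV' S hS) (hV0 S hS).ne'
  have hf'neg : ∀ S : ℝ, 0 < S →
      ((-1) * V S - (K - S) * (-Φ (-(d1 S)))) / (V S) ^ 2 < 0 := by
    intro S hS
    apply div_neg_of_neg_of_pos
    · have hmono : Φ (-(d1 S)) < Φ (-(d2 S)) := by
        apply Phi_strictMono
        rw [hd2]; linarith
      have : (-1) * V S - (K - S) * (-Φ (-(d1 S))) =
          K * (Φ (-(d1 S)) - Φ (-(d2 S))) := by rw [hV_def]; ring
      rw [this]
      have := hVpos S hS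
      nlinarith
    · exact pow_pos (hV0 S hS) 2
  have hanti : StrictAntiOn f (Set.Ioi 0) := by
    apply strictAntiOn_of_deriv_neg (convex_Ioi 0)
    · intro S hS
      exact (hf' S hS).continuousAt.continuousWithinAt
    · intro S hS
      rw [interior_Ioi] at hS
      rw [(hf' S hS).deriv]
      exact hf'neg S hS
  intro S₁ S₂ hS₁ h12
  have hS₂ : 0 < S₂ := hS₁.trans h12
  have hαf : ∀ S : ℝ, α S = x * f S := by
    intro S
    rw [hα, hf_def]
    simp only
    rw [mul_div_assoc]
  rw [hαf, hαf]
  exact mul_lt_mul_of_pos_left (hanti (Set.mem_Ioi.mpr hS₁) (Set.mem_Ioi.mpr hS₂) h12) hx
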